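/- For 3/7 < w < 1, Hewitt's fixed point satisfies the Gauss constraint: with Σ₊ = (3w+1)/8, Σ̄ = √3(7w-3)/8, Σ̃² = 0, Σ̌² = 3(1-w)(11w+1)(7w-3)/(16(17w-1)), and Ω_k = 3(1-w)(5w+1)(3w-1)/(4(17w-1)), the quantity Ω := 1 - Σ₊² - Σ̄² - Σ̃² - Σ̌² - Ω_k is strictly positive. -/

import Mathlib

theorem stmt_4 (w : ℝ) (hw1 : 3/7 < w) (hw2 : w < 1) :
    let Sp : ℝ := (3*w + 1) / 8
    let Sb : ℝ := Real.sqrt 3 * (7*w - 3) / 8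
    let St2 : ℝ := 0
    let Sc2 : ℝ := 3 * (1 - w) * (11*w + 1) * (7*w - 3) / (16 * (17*w - 1))
    let Ωk : ℝ := 3 * (1 - w) * (5*w + 1) * (3*w - 1) / (4 * (17*w - 1))
    0 < 1 - Sp ^ 2 - Sb ^ 2 - St2 - Sc2 - Ωk := by
  intro Sp Sb St2 Sc2 Ωk
  have h3 : (Real.sqrt 3) ^ 2 = 3 := Real.sq_sqrt (by norm_num)
  have hd : (0:ℝ) < 17*w - 1 := by linarith
  have hd' : (17*w - 1) ≠ 0 := ne_of_gt hd
  simp only [Sp, Sb, St2, Sc2, Ωk]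
  rw [show ((Real.sqrt 3*(7*w-3)/8)^2 : ℝ) = 3*(7*w-3)^2/64 by
    rw [div_pow, mul_pow, h3]; norm_num]
  have heq : 1 - ((3*w+1)/8) ^ 2 - 3*(7*w-3)^2/64 - 0
      - 3 * (1 - w) * (11*w + 1) * (7*w - 3) / (16 * (17*w - 1))
      - 3 * (1 - w) * (5*w + 1) * (3*w - 1) / (4 * (17*w - 1))
      = 3*(1-w)*(21*w^2+18*w+1)/(4*(17*w-1)) := by
    field_simp [show w * 17 - 1 ≠ 0 by rwa [mul_comm]]
    ring
  rw [heq]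
  apply div_pos
  · nlinarith [sq_nonneg w]
  · linarith
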